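/- Let m ≥ 1, let G be an invertible complex (2m+1)×(2m+1) matrix with Gᵀ = G, and let A be a complex (2m+1)×(2m+1) matrix satisfying Aᵀ·G + G·A = 0, and assume the characteristic polynomial of A has 2m+1 distinct roots in ℂ. If v₀ ∈ ℂ^{2m+1} is a nonzero vector with A·v₀ = 0, then v₀ is non-null: v₀ᵀ·G·v₀ ≠ 0. -/

import Mathlib

open Matrix Polynomial Module LinearMap

/-- For an element of the odd orthogonal Lie algebra with distinct eigenvalues, a nonzero
zero-eigenvector is non-null. -/
theorem zero_eigenvector_nonnull (m : ℕ) (hm : 1 ≤ m)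
    (G A : Matrix (Fin (2*m+1)) (Fin (2*m+1)) ℂ)
    (hGinv : IsUnit G.det) (hGsymm : Gᵀ = G)
    (hA : Aᵀ * G + G * A = 0)
    (hdistinct : (Matrix.charpoly A).roots.Nodup ∧
      Multiset.card (Matrix.charpoly A).roots = 2*m+1)
    (v₀ : Fin (2*m+1) → ℂ) (hv₀ : v₀ ≠ 0) (hker : A.mulVec v₀ = 0) :
    v₀ ⬝ᵥ G.mulVec v₀ ≠ 0 := by
  intro h
  classical
  set φ : Module.End ℂ (Fin (2*m+1) → ℂ) := Matrix.toLin' A with hφ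
  -- charpoly of φ equals charpoly of A
  have hcp : φ.charpoly = A.charpoly := by
    rw [← LinearMap.charpoly_toMatrix φ (Pi.basisFun ℂ (Fin (2*m+1))),
      LinearMap.toMatrix_eq_toMatrix', hφ, LinearMap.toMatrix'_toLin']
  -- det A = 0
  have hdet : A.det = 0 := by
    rw [← Matrix.exists_mulVec_eq_zero_iff]
    exact ⟨v₀, hv₀, hker⟩
  have hcp0 : A.charpoly ≠ 0 := A.charpoly_monic.ne_zero
  -- 0 is a root of charpoly
  have hroot : (0 : ℂ) ∈ A.charpoly.roots := by
    rw [Polynomial.mem_roots hcp0, Polynomial.IsRoot.def, ← Polynomial.coeff_zero_eq_eval_zero]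
    have := Matrix.det_eq_sign_charpoly_coeff A
    rw [hdet] at this
    have h2 : ((-1 : ℂ) ^ Fintype.card (Fin (2*m+1))) ≠ 0 := by
      simp [pow_ne_zero]
    field_simp at this
    exact (mul_eq_zero.mp this.symm).resolve_left h2
  -- trailing degree of charpoly is 1
  have htd : A.charpoly.natTrailingDegree = 1 := by
    rw [← Polynomial.rootMultiplicity_eq_natTrailingDegree', ← Polynomial.count_roots]
    exact Multiset.count_eq_one_of_mem hdistinct.1 hroot
  -- the maximal generalized eigenspace for 0
  set V := φ.maxGenEigenspace 0 with hVdef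
  have hfinV : Module.finrank ℂ V = 1 := by
    rw [hVdef, LinearMap.finrank_maxGenEigenspace_zero_eq, hcp, htd]
  -- span of v₀ is contained in V
  have hv₀V : v₀ ∈ V := by
    rw [hVdef, Module.End.mem_maxGenEigenspace]
    exact ⟨1, by simp [hφ, Matrix.toLin'_apply, hker]⟩
  have hle : Submodule.span ℂ {v₀} ≤ V := by
    rw [Submodule.span_singleton_le_iff_mem]; exact hv₀V
  have hspan : Submodule.span ℂ {v₀} = V := by
    apply Submodule.eq_of_le_of_finrank_le hle
    rw [hfinV, finrank_span_singleton hv₀]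
  -- V is complemented by the intersection of ranges of powers
  have hV : V = ⨆ (n : ℕ), LinearMap.ker (φ ^ n) := by
    simp [hVdef, ← Module.End.iSup_genEigenspace_eq, Module.End.genEigenspace_nat]
  set W := ⨅ (n : ℕ), LinearMap.range (φ ^ n) with hWdef
  have hVW : IsCompl V W := by
    rw [hV]
    exact LinearMap.isCompl_iSup_ker_pow_iInf_range_pow φ
  -- the vector w := G *ᵥ v₀ annihilates everything
  set w := G.mulVec v₀ with hwdef
  have hwA : Aᵀ.mulVec w = 0 := by
    have : Aᵀ * G = -(G * A) := by
      have := hA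
      rw [add_eq_zero_iff_eq_neg] at this
      exact this
    rw [hwdef, Matrix.mulVec_mulVec, this, Matrix.neg_mulVec, ← Matrix.mulVec_mulVec, hker,
      Matrix.mulVec_zero, neg_zero]
  have hall : ∀ u : Fin (2*m+1) → ℂ, w ⬝ᵥ u = 0 := by
    intro u
    have hu : u ∈ V ⊔ W := by rw [hVW.sup_eq_top]; trivial
    obtain ⟨a, ha, b, hb, rfl⟩ := Submodule.mem_sup.mp hu
    rw [← hspan, Submodule.mem_span_singleton] at ha
    obtain ⟨c, rfl⟩ := ha
    have hbW : b ∈ LinearMap.range (φ ^ 1) := by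
      have := iInf_le (fun n => LinearMap.range (φ ^ n)) 1
      exact this hb
    obtain ⟨y, rfl⟩ := hbW
    have h1 : w ⬝ᵥ (c • v₀) = 0 := by
      rw [dotProduct_smul, hwdef, dotProduct_comm, h, smul_zero]
    have h2 : w ⬝ᵥ (φ ^ 1) y = 0 := by
      have : (φ ^ 1) y = A.mulVec y := by simp [hφ, Matrix.toLin'_apply]
      rw [this, Matrix.dotProduct_mulVec, ← Matrix.mulVec_transpose, hwA,
        zero_dotProduct]
    rw [dotProduct_add, h1, h2, add_zero]
  have hw0 : w = 0 := by
    funext i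
    have := hall (Pi.single i 1)
    rwa [dotProduct_single, mul_one] at this
  -- contradiction with invertibility of G
  have : v₀ = 0 := by
    have := congrArg (fun x => G⁻¹.mulVec x) hw0
    simpa [hwdef, Matrix.mulVec_mulVec, Matrix.nonsing_inv_mul G hGinv] using this
  exact hv₀ this
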